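/- Let φ = Q₁x₁…Qₘxₘ. ψ be a closed prenex SL(k) formula where ψ is a quantifier-free boolean combination of test formulae of the forms x ≈ y, x ↪ (y₁,…,y_k), alloc(x), |h| ≥ n. Then φ has an infinite model if and only if φ ∧ λₘ has a finite model, where λₘ asserts the existence of m pairwise distinct locations not occurring in the heap (neither in its domain nor in the tuples of its image). -/

import Mathlib

def hDom {L : Type} {k : ℕ} (h : L → Option (Fin k → L)) : Set L := {l | h l ≠ none}
def hImg {L : Type} {k : ℕ} (h : L → Option (Fin k → L)) : Set L :=
  {l | ∃ l' v, h l' = some v ∧ ∃ i, v i = l}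
def hElem {L : Type} {k : ℕ} (h : L → Option (Fin k → L)) : Set L := hDom h ∪ hImg h

/-- Well-formed SL-structure over universe U: the heap is a finite partial map whose
domain and image lie inside U. -/
def wfSL {L : Type} {k : ℕ} (U : Set L) (h : L → Option (Fin k → L)) : Prop :=
  hElem h ⊆ U ∧ (hDom h).Finite

inductive TFk (k : ℕ) where
  | eq (x y : ℕ)
  | pto (x : ℕ) (ys : Fin k → ℕ)
  | alloc (x : ℕ)
  | hge (n : ℕ)

inductive BCk (k : ℕ) where
  | atom (a : TFk k)
  | top
  | neg (φ : BCk k)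
  | conj (φ ψ : BCk k)

def tfkSat {L : Type} {k : ℕ} (s : ℕ → L) (h : L → Option (Fin k → L)) : TFk k → Prop
  | .eq x y => s x = s y
  | .pto x ys => h (s x) = some (fun i => s (ys i))
  | .alloc x => s x ∈ hDom h
  | .hge n => n ≤ (hDom h).ncard

def bckSat {L : Type} {k : ℕ} (s : ℕ → L) (h : L → Option (Fin k → L)) : BCk k → Prop
  | .atom a => tfkSat s h a
  | .top => True
  | .neg φ => ¬ bckSat s h φ
  | .conj φ ψ => bckSat s h φ ∧ bckSat s h ψ

def prSat {L : Type} {k : ℕ} (U : Set L) (h : L → Option (Fin k → L)) :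
    List (Bool × ℕ) → (ℕ → L) → BCk k → Prop
  | [], s, φ => bckSat s h φ
  | (b, x) :: Q, s, φ =>
      if b then ∀ e ∈ U, prSat U h Q (Function.update s x e) φ
      else ∃ e ∈ U, prSat U h Q (Function.update s x e) φ

def tfkVars {k : ℕ} : TFk k → Set ℕ
  | .eq x y => {x, y}
  | .pto x ys => {x} ∪ Set.range ys
  | .alloc x => {x}
  | .hge _ => ∅

def bckVars {k : ℕ} : BCk k → Set ℕ
  | .atom a => tfkVars a
  | .top => ∅
  | .neg φ => bckVars φ
  | .conj φ ψ => bckVars φ ∪ bckVars ψ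

/- ======================= auxiliary development ======================= -/

namespace SLaux

variable {k : ℕ}

lemma bckVars_finite (φ : BCk k) : (bckVars φ).Finite := by
  induction φ with
  | atom a =>
      cases a with
      | eq x y => exact (Set.finite_singleton y).insert x
      | pto x ys => exact (Set.finite_singleton x).union (Set.finite_range ys)
      | alloc x => exact Set.finite_singleton x
      | hge n => exact Set.finite_empty
  | top => exact Set.finite_empty
  | neg φ ih => exact ih
  | conj φ ψ ih1 ih2 => exact ih1.union ih2

def bnd (Q : List (Bool × ℕ)) : Set ℕ := {x | ∃ b, (b, x) ∈ Q}

lemma bnd_cons (b : Bool) (x : ℕ) (Q : List (Bool × ℕ)) :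
    bnd ((b, x) :: Q) = insert x (bnd Q) := by
  ext y
  simp only [bnd, Set.mem_setOf_eq, List.mem_cons, Prod.mk.injEq, Set.mem_insert_iff]
  constructor
  · rintro ⟨b', ⟨_, rfl⟩ | h⟩
    · exact Or.inl rfl
    · exact Or.inr ⟨b', h⟩
  · rintro (rfl | ⟨b', h⟩)
    · exact ⟨b, Or.inl ⟨rfl, rfl⟩⟩
    · exact ⟨b', Or.inr h⟩

lemma hElem_finite (h : ℕ → Option (Fin k → ℕ)) (hd : (hDom h).Finite) :
    (hElem h).Finite := by
  have himg : (hImg h).Finite := by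
    have hsub : hImg h ⊆ ⋃ l ∈ hDom h, ((h l).elim ∅ Set.range) := by
      rintro a ⟨l, v, hv, i, rfl⟩
      have hl : l ∈ hDom h := by simp [hDom, hv]
      refine Set.mem_biUnion hl ?_
      simp [hv]
    refine (Set.Finite.biUnion hd (fun l _ => ?_)).subset hsub
    cases hl : h l with
    | none => simp
    | some v => simpa [hl] using Set.finite_range v
  exact hd.union himg

structure Inv (h : ℕ → Option (Fin k → ℕ)) (U U' W : Set ℕ) (s s' : ℕ → ℕ) : Prop where
  pat : ∀ x ∈ W, ∀ y ∈ W, (s x = s y ↔ s' x = s' y)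
  agr : ∀ x ∈ W, (s x ∈ hElem h ∨ s' x ∈ hElem h) → s x = s' x
  mem : ∀ x ∈ W, s x ∈ U
  mem' : ∀ x ∈ W, s' x ∈ U'

lemma Inv.symm {h : ℕ → Option (Fin k → ℕ)} {U U' W s s'}
    (I : Inv h U U' W s s') : Inv h U' U W s' s :=
  ⟨fun x hx y hy => (I.pat x hx y hy).symm,
   fun x hx hm => (I.agr x hx hm.symm).symm, I.mem', I.mem⟩

lemma Inv.mono {h : ℕ → Option (Fin k → ℕ)} {U U' W₁ W₂ s s'}
    (hsub : W₁ ⊆ W₂) (I : Inv h U U' W₂ s s') : Inv h U U' W₁ s s' :=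
  ⟨fun x hx y hy => I.pat x (hsub hx) y (hsub hy),
   fun x hx => I.agr x (hsub hx), fun x hx => I.mem x (hsub hx),
   fun x hx => I.mem' x (hsub hx)⟩

lemma tfk_mp {h : ℕ → Option (Fin k → ℕ)} {U U' W s s'}
    (I : Inv h U U' W s s') (a : TFk k) (ha : tfkVars a ⊆ W) :
    tfkSat s h a → tfkSat s' h a := by
  cases a with
  | eq x y =>
      have hx : x ∈ W := ha (by simp [tfkVars])
      have hy : y ∈ W := ha (by simp [tfkVars])
      exact (I.pat x hx y hy).mp
  | alloc x =>
      have hx : x ∈ W := ha (by simp [tfkVars])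
      intro hd
      have := I.agr x hx (Or.inl (Set.mem_union_left _ hd))
      simpa [tfkSat, ← this] using hd
  | hge n => exact fun hn => hn
  | pto x ys =>
      have hx : x ∈ W := ha (by simp [tfkVars])
      have hys : ∀ i, ys i ∈ W := fun i => ha (by
        simp only [tfkVars, Set.mem_union, Set.mem_singleton_iff]
        exact Or.inr ⟨i, rfl⟩)
      intro hpt
      simp only [tfkSat] at hpt ⊢
      have hdx : s x ∈ hDom h := by simp [hDom, hpt]
      have hsx : s x = s' x := I.agr x hx (Or.inl (Set.mem_union_left _ hdx))
      rw [← hsx, hpt]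
      congr 1
      funext i
      have himg : s (ys i) ∈ hImg h := ⟨s x, _, hpt, ⟨i, rfl⟩⟩
      exact I.agr (ys i) (hys i) (Or.inl (Set.mem_union_right _ himg))

lemma bck_transfer {h : ℕ → Option (Fin k → ℕ)} {U U' W s s'}
    (I : Inv h U U' W s s') :
    ∀ φ : BCk k, bckVars φ ⊆ W → (bckSat s h φ ↔ bckSat s' h φ)
  | .atom a, ha => ⟨tfk_mp I a ha, tfk_mp I.symm a ha⟩
  | .top, _ => Iff.rfl
  | .neg ψ, hv => not_congr (bck_transfer I ψ hv)
  | .conj ψ χ, hv => by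
      simp only [bckSat]
      exact and_congr
        (bck_transfer I ψ (Set.subset_union_left.trans hv))
        (bck_transfer I χ (Set.subset_union_right.trans hv))

lemma Inv.update {h : ℕ → Option (Fin k → ℕ)} {U U' W s s'} {x e e' : ℕ}
    (I : Inv h U U' W s s') (hxW : x ∉ W)
    (pe : ∀ y ∈ W, (e = s y ↔ e' = s' y))
    (pagr : e ∈ hElem h ∨ e' ∈ hElem h → e = e')
    (heU : e ∈ U) (he'U' : e' ∈ U') :
    Inv h U U' (insert x W) (Function.update s x e) (Function.update s' x e') := by
  have hne : ∀ y ∈ W, y ≠ x := fun y hy hyx => hxW (by rw [← hyx]; exact hy)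
  have hs : ∀ y ∈ W, Function.update s x e y = s y := fun y hy =>
    Function.update_of_ne (hne y hy) _ _
  have hs' : ∀ y ∈ W, Function.update s' x e' y = s' y := fun y hy =>
    Function.update_of_ne (hne y hy) _ _
  constructor
  · rintro a (rfl | ha) b (rfl | hb)
    · simp
    · rw [Function.update_self, Function.update_self, hs b hb, hs' b hb]
      exact pe b hb
    · rw [Function.update_self, Function.update_self, hs a ha, hs' a ha]
      rw [eq_comm, @eq_comm _ (s' a)]
      exact pe a ha
    · rw [hs a ha, hs b hb, hs' a ha, hs' b hb]
      exact I.pat a ha b hb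
  · rintro a (rfl | ha)
    · rw [Function.update_self, Function.update_self]
      exact pagr
    · rw [hs a ha, hs' a ha]
      exact I.agr a ha
  · rintro a (rfl | ha)
    · rw [Function.update_self]; exact heU
    · rw [hs a ha]; exact I.mem a ha
  · rintro a (rfl | ha)
    · rw [Function.update_self]; exact he'U'
    · rw [hs' a ha]; exact I.mem' a ha

lemma step {h : ℕ → Option (Fin k → ℕ)} {U U' W : Set ℕ} {s s' : ℕ → ℕ} {x e : ℕ} {m r : ℕ}
    (hU' : hElem h ⊆ U') (hWfin : W.Finite) (hxW : x ∉ W)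
    (I : Inv h U U' W s s')
    (cnt' : ((U' \ hElem h) ∩ s' '' W).ncard + (r + 1) ≤ m)
    (slk' : (U' \ hElem h).Infinite ∨ m ≤ (U' \ hElem h).ncard)
    (he : e ∈ U) :
    ∃ e' ∈ U', Inv h U U' (insert x W) (Function.update s x e) (Function.update s' x e') := by
  by_cases hel : e ∈ hElem h
  · refine ⟨e, hU' hel, I.update hxW ?_ (fun _ => rfl) he (hU' hel)⟩
    intro y hy
    constructor
    · intro hey
      have := I.agr y hy (Or.inl (hey ▸ hel))
      rw [hey, this]
    · intro hey
      have := I.agr y hy (Or.inr (hey ▸ hel))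
      rw [hey, this]
  · by_cases him : ∃ y ∈ W, s y = e
    · obtain ⟨y₀, hy₀, hsy₀⟩ := him
      have he'el : s' y₀ ∉ hElem h := by
        intro hc
        have heq := I.agr y₀ hy₀ (Or.inr hc)
        apply hel
        rw [← hsy₀, heq]
        exact hc
      refine ⟨s' y₀, I.mem' y₀ hy₀, I.update hxW ?_
        (fun hc => absurd hc (by simp [hel, he'el])) he (I.mem' y₀ hy₀)⟩
      intro y hy
      rw [← hsy₀]
      exact I.pat y₀ hy₀ y hy
    · push_neg at him
      have himfin : (s' '' W).Finite := hWfin.image _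
      have hex : ∃ e', e' ∈ (U' \ hElem h) ∧ e' ∉ s' '' W := by
        by_cases hA'fin : (U' \ hElem h).Finite
        · have hm : m ≤ (U' \ hElem h).ncard := by
            rcases slk' with hinf | hc
            · exact absurd hA'fin hinf
            · exact hc
          by_contra hcon
          push_neg at hcon
          have hsub : (U' \ hElem h) ⊆ s' '' W := fun a ha => hcon a ha
          have heq : (U' \ hElem h) ∩ s' '' W = (U' \ hElem h) :=
            Set.inter_eq_left.mpr hsub
          rw [heq] at cnt'
          omega
        · have : ((U' \ hElem h) \ s' '' W).Infinite :=
            Set.Infinite.diff hA'fin himfin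
          obtain ⟨e', he'⟩ := this.nonempty
          exact ⟨e', he'.1, he'.2⟩
      obtain ⟨e', he'A, he'im⟩ := hex
      refine ⟨e', he'A.1, I.update hxW ?_
        (fun hc => absurd hc (by simp [hel, he'A.2])) he he'A.1⟩
      intro y hy
      constructor
      · intro hey
        exact absurd (hey.symm) (him y hy)
      · intro hey
        exact absurd ⟨y, hy, hey.symm⟩ he'im

lemma cnt_step {A : Set ℕ} {s : ℕ → ℕ} {W₁ W : Set ℕ} {x : ℕ}
    (hWfin : W.Finite) (hxW : x ∉ W) (hsub : W₁ ⊆ insert x W) (e : ℕ) :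
    (A ∩ Function.update s x e '' W₁).ncard ≤ (A ∩ s '' W).ncard + 1 := by
  have h1 : A ∩ Function.update s x e '' W₁ ⊆ insert e (A ∩ s '' W) := by
    rintro a ⟨haA, y, hy, rfl⟩
    rcases hsub hy with rfl | hyW
    · simp
    · right
      have hne : y ≠ x := fun hyx => hxW (by rw [← hyx]; exact hyW)
      rw [Function.update_of_ne hne _ _] at haA ⊢
      exact ⟨haA, y, hyW, rfl⟩
  have h2 : (insert e (A ∩ s '' W)).Finite :=
    (((hWfin.image s).subset Set.inter_subset_right).insert e)
  calc (A ∩ Function.update s x e '' W₁).ncard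
      ≤ (insert e (A ∩ s '' W)).ncard := Set.ncard_le_ncard h1 h2
    _ ≤ (A ∩ s '' W).ncard + 1 := Set.ncard_insert_le _ _

lemma prTransfer {h : ℕ → Option (Fin k → ℕ)} {U U' : Set ℕ}
    (hU : hElem h ⊆ U) (hU' : hElem h ⊆ U') (φ : BCk k) (m : ℕ)
    (slkA : (U \ hElem h).Infinite ∨ m ≤ (U \ hElem h).ncard)
    (slkA' : (U' \ hElem h).Infinite ∨ m ≤ (U' \ hElem h).ncard)
    (Q : List (Bool × ℕ)) :
    ∀ s s' : ℕ → ℕ,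
      Inv h U U' (bckVars φ \ bnd Q) s s' →
      ((U \ hElem h) ∩ s '' (bckVars φ \ bnd Q)).ncard + Q.length ≤ m →
      ((U' \ hElem h) ∩ s' '' (bckVars φ \ bnd Q)).ncard + Q.length ≤ m →
      (prSat U h Q s φ ↔ prSat U' h Q s' φ) := by
  induction Q with
  | nil =>
      intro s s' I _ _
      exact bck_transfer I φ (by simp [bnd])
  | cons p Q ih =>
      obtain ⟨b, x⟩ := p
      intro s s' I c c'
      have hWfin : (bckVars φ \ bnd ((b, x) :: Q)).Finite :=
        (bckVars_finite φ).diff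
      have hxW : x ∉ bckVars φ \ bnd ((b, x) :: Q) := by
        intro hc
        exact hc.2 (by rw [bnd_cons]; exact Set.mem_insert _ _)
      have hsub : bckVars φ \ bnd Q ⊆ insert x (bckVars φ \ bnd ((b, x) :: Q)) := by
        intro y hy
        by_cases hyx : y = x
        · exact hyx ▸ Set.mem_insert _ _
        · right
          refine ⟨hy.1, ?_⟩
          rw [bnd_cons]
          rintro (rfl | hyb)
          · exact hyx rfl
          · exact hy.2 hyb
      simp only [List.length_cons] at c c'
      -- key: forward choice
      have key : ∀ e ∈ U, ∃ e' ∈ U',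
          (prSat U h Q (Function.update s x e) φ ↔
           prSat U' h Q (Function.update s' x e') φ) := by
        intro e he
        obtain ⟨e', he', I2⟩ := step (r := Q.length) hU' hWfin hxW I (by omega) slkA' he
        refine ⟨e', he', ih _ _ (I2.mono hsub) ?_ ?_⟩
        · have := cnt_step (A := U \ hElem h) (s := s) hWfin hxW hsub e
          omega
        · have := cnt_step (A := U' \ hElem h) (s := s') hWfin hxW hsub e'
          omega
      have key' : ∀ e' ∈ U', ∃ e ∈ U,
          (prSat U h Q (Function.update s x e) φ ↔
           prSat U' h Q (Function.update s' x e') φ) := by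
        intro e' he'
        obtain ⟨e, he, I2⟩ := step (r := Q.length) hU hWfin hxW I.symm (by omega) slkA he'
        refine ⟨e, he, ih _ _ (I2.symm.mono hsub) ?_ ?_⟩
        · have := cnt_step (A := U \ hElem h) (s := s) hWfin hxW hsub e
          omega
        · have := cnt_step (A := U' \ hElem h) (s := s') hWfin hxW hsub e'
          omega
      cases b with
      | false =>
          simp only [prSat, if_neg (by simp : ¬ (false = true))]
          constructor
          · rintro ⟨e, he, hp⟩
            obtain ⟨e', he', hiff⟩ := key e he
            exact ⟨e', he', hiff.mp hp⟩
          · rintro ⟨e', he', hp⟩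
            obtain ⟨e, he, hiff⟩ := key' e' he'
            exact ⟨e, he, hiff.mpr hp⟩
      | true =>
          simp only [prSat, if_pos rfl]
          constructor
          · intro H e' he'
            obtain ⟨e, he, hiff⟩ := key' e' he'
            exact hiff.mp (H e he)
          · intro H e he
            obtain ⟨e', he', hiff⟩ := key e he
            exact hiff.mpr (H e' he')

end SLaux

/-- a closed prenex formula with matrix a boolean combination of test
formulae of the forms x ≈ y, x ↪ ȳ, alloc(x), |h| ≥ n has an infinite model iff
φ ∧ λₘ has a finite model, where m is the number of quantifiers and λₘ states the
existence of m distinct locations not occurring in the heap (λₘ holds in (U,s,h)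
exactly when |U \ elem(h)| ≥ m).  Universes are countable, encoded as sets of ℕ. -/
theorem infinite_iff_finite_with_slack {k : ℕ}
    (Q : List (Bool × ℕ)) (φ : BCk k)
    (hclosed : bckVars φ ⊆ {x | ∃ b, (b, x) ∈ Q}) :
    (∃ (U : Set ℕ) (s : ℕ → ℕ) (h : ℕ → Option (Fin k → ℕ)),
        U.Infinite ∧ wfSL U h ∧ (∀ x, s x ∈ U) ∧ prSat U h Q s φ)
    ↔
    (∃ (U : Set ℕ) (s : ℕ → ℕ) (h : ℕ → Option (Fin k → ℕ)),
        U.Finite ∧ U.Nonempty ∧ wfSL U h ∧ (∀ x, s x ∈ U) ∧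
        prSat U h Q s φ ∧ Q.length ≤ (U \ hElem h).ncard) := by
  have hW0 : bckVars φ \ SLaux.bnd Q = ∅ := Set.diff_eq_empty.mpr hclosed
  have invTriv : ∀ (h : ℕ → Option (Fin k → ℕ)) (U U' : Set ℕ) (s s' : ℕ → ℕ),
      SLaux.Inv h U U' (bckVars φ \ SLaux.bnd Q) s s' := by
    intro h U U' s s'
    rw [hW0]
    exact ⟨fun x hx => (Set.notMem_empty x hx).elim,
           fun x hx => (Set.notMem_empty x hx).elim,
           fun x hx => (Set.notMem_empty x hx).elim,
           fun x hx => (Set.notMem_empty x hx).elim⟩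
  constructor
  · rintro ⟨U, s, h, hUinf, ⟨hUsub, hdfin⟩, hs, hsat⟩
    have helfin := SLaux.hElem_finite h hdfin
    have hAinf : (U \ hElem h).Infinite := hUinf.diff helfin
    obtain ⟨B, hBsub, hBcard⟩ := hAinf.exists_subset_card_eq Q.length
    obtain ⟨u₀, hu₀⟩ := hUinf.nonempty
    refine ⟨hElem h ∪ ↑B ∪ {u₀}, fun _ => u₀, h, ?_, ⟨u₀, Or.inr rfl⟩,
      ⟨fun a ha => Or.inl (Or.inl ha), hdfin⟩, fun _ => Or.inr rfl, ?_, ?_⟩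
    · exact (helfin.union B.finite_toSet).union (Set.finite_singleton u₀)
    · -- transfer to the finite model
      have hslack : Q.length ≤ ((hElem h ∪ ↑B ∪ {u₀}) \ hElem h).ncard := by
        have hBslack : (↑B : Set ℕ) ⊆ (hElem h ∪ ↑B ∪ {u₀}) \ hElem h :=
          fun a haB => ⟨Or.inl (Or.inr haB), (hBsub haB).2⟩
        calc Q.length = B.card := hBcard.symm
          _ = (↑B : Set ℕ).ncard := (Set.ncard_coe_finset B).symm
          _ ≤ _ := Set.ncard_le_ncard hBslack
                ((((helfin.union B.finite_toSet).union (Set.finite_singleton u₀)).diff))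
      exact (SLaux.prTransfer hUsub (fun a ha => Or.inl (Or.inl ha)) φ Q.length
        (Or.inl hAinf) (Or.inr hslack) Q s (fun _ => u₀)
        (invTriv _ _ _ _ _) (by simp [hW0]) (by simp [hW0])).mp hsat
    · have hBslack : (↑B : Set ℕ) ⊆ (hElem h ∪ ↑B ∪ {u₀}) \ hElem h :=
        fun a haB => ⟨Or.inl (Or.inr haB), (hBsub haB).2⟩
      calc Q.length = B.card := hBcard.symm
        _ = (↑B : Set ℕ).ncard := (Set.ncard_coe_finset B).symm
        _ ≤ _ := Set.ncard_le_ncard hBslack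
              ((((helfin.union B.finite_toSet).union (Set.finite_singleton u₀)).diff))
  · rintro ⟨U, s, h, hUfin, hUne, ⟨hUsub, hdfin⟩, hs, hsat, hslack⟩
    obtain ⟨N, hN⟩ := hUfin.bddAbove
    have hNlt : ∀ u ∈ U, u < N + 1 := fun u hu => Nat.lt_succ_of_le (hN hu)
    refine ⟨U ∪ Set.Ici (N + 1), s, h, ?_, ⟨hUsub.trans Set.subset_union_left, hdfin⟩,
      fun x => Set.subset_union_left (hs x), ?_⟩
    · exact (Set.Ici_infinite _).mono Set.subset_union_right
    · -- transfer to the infinite model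
      have hIci : Set.Ici (N + 1) ⊆ (U ∪ Set.Ici (N + 1)) \ hElem h := by
        intro a ha
        refine ⟨Or.inr ha, fun hc => ?_⟩
        exact absurd ha (by simpa using hNlt a (hUsub hc))
      have hA'inf : ((U ∪ Set.Ici (N + 1)) \ hElem h).Infinite :=
        (Set.Ici_infinite _).mono hIci
      exact (SLaux.prTransfer hUsub (hUsub.trans Set.subset_union_left) φ Q.length
        (Or.inr hslack) (Or.inl hA'inf) Q s s
        (invTriv _ _ _ _ _) (by simp [hW0]) (by simp [hW0])).mp hsat
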